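/- arXiv:1008.1191 — 2 statements merged into one kernel-verified Lean document; each statement's English description precedes it below -/
import Mathlib

section
/- The deletion-neighborhood filter is lossless: for words q, s with ed(q, s) ≤ d, the sets of subsequences of q obtained by at most d deletions and of subsequences of s obtained by at most d deletions have nonempty intersection. -/
/-- Costs for the Levenshtein edit distance (removed from Mathlib; old definition restored). -/
structure Levenshtein.Cost (α β δ : Type*) where
  delete : α → δ
  insert : β → δ
  substitute : α → β → δ

/-- The default cost structure: each insertion, deletion and substitution costs 1. -/
def Levenshtein.defaultCost {α : Type*} [DecidableEq α] : Levenshtein.Cost α α ℕ where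
  delete _ := 1
  insert _ := 1
  substitute a b := if a = b then 0 else 1

/-- Helper for `suffixLevenshtein` (old Mathlib definition). -/
def Levenshtein.impl {α β δ : Type*} (C : Levenshtein.Cost α β δ) [AddZeroClass δ] [Min δ]
    (xs : List α) (y : β) (d : {r : List δ // 0 < r.length}) :
    {r : List δ // 0 < r.length} :=
  let ⟨ds, w⟩ := d
  xs.zip (ds.zip ds.tail) |>.foldr
    (init := ⟨[C.insert y + ds.getLast (List.ne_nil_of_length_pos w)], by simp⟩)
    (fun ⟨x, d₀, d₁⟩ ⟨r, w⟩ =>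
      ⟨min (C.delete x + r[0]) (min (C.insert y + d₀) (C.substitute x y + d₁)) :: r, by simp⟩)

/-- `suffixLevenshtein C xs ys`: the edit distances of each suffix of `xs` to `ys`
(old Mathlib definition). -/
def suffixLevenshtein {α β δ : Type*} (C : Levenshtein.Cost α β δ) [AddZeroClass δ] [Min δ]
    (xs : List α) (ys : List β) : {r : List δ // 0 < r.length} :=
  ys.foldr
    (Levenshtein.impl C xs)
    (xs.foldr (init := ⟨[0], by simp⟩) (fun a ⟨r, w⟩ => ⟨(C.delete a + r[0]) :: r, by simp⟩))

/-- The Levenshtein distance with cost structure `C` (old Mathlib definition). -/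
def levenshtein {α β δ : Type*} (C : Levenshtein.Cost α β δ) [AddZeroClass δ] [Min δ]
    (xs : List α) (ys : List β) : δ :=
  let ⟨r, w⟩ := suffixLevenshtein C xs ys
  r[0]

/-- Levenshtein edit distance with unit costs. -/
def ed {α : Type*} [DecidableEq α] (u v : List α) : ℕ :=
  levenshtein Levenshtein.defaultCost u v

/-- `R_d(w)`: subsequences of `w` obtained by deleting at most `d` characters. -/
def resSet {α : Type*} (d : ℕ) (w : List α) : Set (List α) :=
  {r | r.Sublist w ∧ w.length ≤ r.length + d}

section LevLemmas
variable {α β δ : Type*} (C : Levenshtein.Cost α β δ) [AddZeroClass δ] [Min δ]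

theorem sufLev_cons (x : α) (xs : List α) (ys : List β) :
    ∃ h, (suffixLevenshtein C (x :: xs) ys).1 = h :: (suffixLevenshtein C xs ys).1 := by
  induction ys with
  | nil => exact ⟨_, rfl⟩
  | cons y ys ih =>
    obtain ⟨h, hh⟩ := ih
    obtain ⟨d1, rest, hdr⟩ := List.exists_cons_of_length_pos (suffixLevenshtein C xs ys).2
    have e1 : suffixLevenshtein C xs ys = ⟨d1 :: rest, by simp⟩ := Subtype.ext hdr
    have e2 : suffixLevenshtein C (x :: xs) ys = ⟨h :: d1 :: rest, by simp⟩ :=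
      Subtype.ext (hh.trans (by rw [hdr]))
    show ∃ h', (Levenshtein.impl C (x :: xs) y (suffixLevenshtein C (x :: xs) ys)).1 =
      h' :: (Levenshtein.impl C xs y (suffixLevenshtein C xs ys)).1
    rw [e1, e2]
    exact ⟨_, rfl⟩

theorem sufLev_nil (ys : List β) : ∃ v, (suffixLevenshtein C [] ys).1 = [v] := by
  induction ys with
  | nil => exact ⟨0, rfl⟩
  | cons y ys ih =>
    obtain ⟨v, hv⟩ := ih
    have e : suffixLevenshtein C [] ys = ⟨[v], by simp⟩ := Subtype.ext hv
    show ∃ v', (Levenshtein.impl C [] y (suffixLevenshtein C [] ys)).1 = [v']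
    rw [e]
    exact ⟨_, rfl⟩

@[simp] theorem lev_nil_nil : levenshtein C [] [] = 0 := rfl

@[simp] theorem lev_cons_nil (x : α) (xs : List α) :
    levenshtein C (x :: xs) [] = C.delete x + levenshtein C xs [] := rfl

@[simp] theorem lev_nil_cons (y : β) (ys : List β) :
    levenshtein C [] (y :: ys) = C.insert y + levenshtein C [] ys := by
  obtain ⟨v, hv⟩ := sufLev_nil C ys
  have e : suffixLevenshtein C [] ys = ⟨[v], by simp⟩ := Subtype.ext hv
  unfold levenshtein
  rw [show suffixLevenshtein C [] (y :: ys) =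
    Levenshtein.impl C [] y (suffixLevenshtein C [] ys) from rfl, e]
  rfl

@[simp] theorem lev_cons_cons (x : α) (xs : List α) (y : β) (ys : List β) :
    levenshtein C (x :: xs) (y :: ys) =
      min (C.delete x + levenshtein C xs (y :: ys))
        (min (C.insert y + levenshtein C (x :: xs) ys)
          (C.substitute x y + levenshtein C xs ys)) := by
  obtain ⟨h, hh⟩ := sufLev_cons C x xs ys
  obtain ⟨d1, rest, hdr⟩ := List.exists_cons_of_length_pos (suffixLevenshtein C xs ys).2
  have e1 : suffixLevenshtein C xs ys = ⟨d1 :: rest, by simp⟩ := Subtype.ext hdr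
  have e2 : suffixLevenshtein C (x :: xs) ys = ⟨h :: d1 :: rest, by simp⟩ :=
    Subtype.ext (hh.trans (by rw [hdr]))
  unfold levenshtein
  rw [show suffixLevenshtein C (x :: xs) (y :: ys) =
      Levenshtein.impl C (x :: xs) y (suffixLevenshtein C (x :: xs) ys) from rfl,
    show suffixLevenshtein C xs (y :: ys) =
      Levenshtein.impl C xs y (suffixLevenshtein C xs ys) from rfl, e1, e2]
  rfl

end LevLemmas

lemma ed_aux {α : Type*} [DecidableEq α] (q s : List α) :
    ∃ r : List α, r.Sublist q ∧ r.Sublist s ∧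
      q.length ≤ r.length + ed q s ∧ s.length ≤ r.length + ed q s := by
  induction q generalizing s with
  | nil =>
    refine ⟨[], List.nil_sublist _, List.nil_sublist _, by simp, ?_⟩
    have : ed ([] : List α) s = s.length := by
      induction s with
      | nil => simp [ed]
      | cons y ys ih => simp [ed, Levenshtein.defaultCost] at ih ⊢; omega
    simp [this]
  | cons x xs ihq =>
    induction s with
    | nil =>
      refine ⟨[], List.nil_sublist _, List.nil_sublist _, ?_, by simp⟩
      have : ed (x :: xs) ([] : List α) = (x :: xs).length := by
        clear ihq
        induction xs with
        | nil => simp [ed, Levenshtein.defaultCost]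
        | cons z zs ih => simp [ed, Levenshtein.defaultCost] at ih ⊢; omega
      simp [this]
    | cons y ys ihs =>
      have hmin : ed (x :: xs) (y :: ys) =
          min (1 + ed xs (y :: ys))
            (min (1 + ed (x :: xs) ys) ((if x = y then 0 else 1) + ed xs ys)) := by
        simp [ed, Levenshtein.defaultCost]
      rcases min_choice (1 + ed xs (y :: ys))
          (min (1 + ed (x :: xs) ys) ((if x = y then 0 else 1) + ed xs ys)) with h | h
      · have heq : ed (x :: xs) (y :: ys) = 1 + ed xs (y :: ys) := hmin.trans h
        obtain ⟨r, h1, h2, h3, h4⟩ := ihq (y :: ys)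
        exact ⟨r, h1.cons x, h2, by simp only [List.length_cons]; omega,
          by simp only [List.length_cons] at h4 ⊢; omega⟩
      · rcases min_choice (1 + ed (x :: xs) ys) ((if x = y then 0 else 1) + ed xs ys)
            with h' | h'
        · have heq : ed (x :: xs) (y :: ys) = 1 + ed (x :: xs) ys := (hmin.trans h).trans h'
          obtain ⟨r, h1, h2, h3, h4⟩ := ihs
          exact ⟨r, h1, h2.cons y, by simp only [List.length_cons] at h3 ⊢; omega,
            by simp only [List.length_cons]; omega⟩
        · have heq : ed (x :: xs) (y :: ys) = (if x = y then 0 else 1) + ed xs ys :=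
            (hmin.trans h).trans h'
          by_cases hxy : x = y
          · rw [if_pos hxy] at heq
            obtain ⟨r, h1, h2, h3, h4⟩ := ihq ys
            subst hxy
            exact ⟨x :: r, h1.cons₂ x, h2.cons₂ x,
              by simp only [List.length_cons]; omega, by simp only [List.length_cons]; omega⟩
          · rw [if_neg hxy] at heq
            obtain ⟨r, h1, h2, h3, h4⟩ := ihq ys
            exact ⟨r, h1.cons x, h2.cons y,
              by simp only [List.length_cons]; omega, by simp only [List.length_cons]; omega⟩

/-- The deletion-neighborhood filter is lossless: if `ed q s ≤ d` then
`R_d(q) ∩ R_d(s)` is nonempty. -/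
theorem filter_lossless {α : Type*} [DecidableEq α]
    (q s : List α) (d : ℕ) (hd : ed q s ≤ d) :
    (resSet d q ∩ resSet d s).Nonempty := by
  obtain ⟨r, h1, h2, h3, h4⟩ := ed_aux q s
  exact ⟨r, ⟨h1, by omega⟩, ⟨h2, by omega⟩⟩
end

section
/- For a word w of length ℓ, the total number of residuals in the generalized split neighborhood, C(⌈ℓ/2⌉, ⌈d/2⌉) + C(⌊ℓ/2⌋, ⌈d/2⌉), is at most C(ℓ, d) whenever d ≥ 2 and ℓ ≥ 2d (i.e., splitting reduces the number of generated residual strings). -/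
open Finset Finset.Nat

lemma choose_mono_right {n r s : ℕ} (hrs : r ≤ s) (hs : s ≤ n / 2) :
    Nat.choose n r ≤ Nat.choose n s := by
  induction s with
  | zero => simp_all
  | succ m ih =>
    rcases Nat.lt_or_ge r (m+1) with h | h
    · exact le_trans (ih (Nat.lt_succ_iff.mp h) (le_trans (Nat.le_succ m) hs))
        (Nat.choose_le_succ_of_lt_half_left hs)
    · have : r = m + 1 := le_antisymm hrs h
      simp [this]

lemma choose_add_choose_le {a b k : ℕ} (hk : 1 ≤ k) :
    Nat.choose a k + Nat.choose b k ≤ Nat.choose (a + b) k := by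
  rw [Nat.add_choose_eq]
  have hsub : ({(k, 0), (0, k)} : Finset (ℕ × ℕ)) ⊆ antidiagonal k := by
    intro p hp
    simp only [mem_insert, mem_singleton] at hp
    rcases hp with h | h <;> simp [h, HasAntidiagonal.mem_antidiagonal]
  calc Nat.choose a k + Nat.choose b k
      = ∑ ij ∈ ({(k, 0), (0, k)} : Finset (ℕ × ℕ)), a.choose ij.1 * b.choose ij.2 := by
        rw [Finset.sum_insert (by simp; omega), Finset.sum_singleton]
        simp
    _ ≤ ∑ ij ∈ antidiagonal k, a.choose ij.1 * b.choose ij.2 :=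
        Finset.sum_le_sum_of_subset hsub

/-- Splitting reduces the number of generated residual strings:
`C(⌈ℓ/2⌉, ⌈d/2⌉) + C(⌊ℓ/2⌋, ⌈d/2⌉) ≤ C(ℓ, d)` for `d ≥ 2` and `ℓ ≥ 2d`. -/
theorem split_residual_count_le (ℓ d : ℕ) (hd : 2 ≤ d) (hl : 2 * d ≤ ℓ) :
    Nat.choose ((ℓ + 1) / 2) ((d + 1) / 2) + Nat.choose (ℓ / 2) ((d + 1) / 2) ≤
      Nat.choose ℓ d := by
  have hsum : (ℓ + 1) / 2 + ℓ / 2 = ℓ := by omega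
  have h1 : 1 ≤ (d + 1) / 2 := by omega
  calc Nat.choose ((ℓ + 1) / 2) ((d + 1) / 2) + Nat.choose (ℓ / 2) ((d + 1) / 2)
      ≤ Nat.choose ((ℓ + 1) / 2 + ℓ / 2) ((d + 1) / 2) := choose_add_choose_le h1
    _ = Nat.choose ℓ ((d + 1) / 2) := by rw [hsum]
    _ ≤ Nat.choose ℓ d := choose_mono_right (by omega) (by omega)
end
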